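/- Let T > 0 and let f : ℝ → ℝ be measurable, nonnegative on [0,T], integrable on [0,T], with ∫₀^T f(x) dx > 0. Then the function g(b) = T·(∫₀^T (f(x)+b)² dx) / (∫₀^T (f(x)+b) dx)² is antitone (nonincreasing) on [0, ∞): for all 0 ≤ b₁ ≤ b₂ one has g(b₂) ≤ g(b₁). -/

import Mathlib

open MeasureTheory

/-- Let `T > 0` and `f : ℝ → ℝ` be measurable, nonnegative on `[0,T]`, integrable on
`[0,T]`, with `∫₀^T f > 0`. Then `g(b) = T·(∫₀^T (f+b)²)/(∫₀^T (f+b))²` is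
nonincreasing on `[0, ∞)`. -/
theorem kurtosis_antitone_in_shift (T : ℝ) (hT : 0 < T) (f : ℝ → ℝ)
    (hmeas : Measurable f)
    (hnonneg : ∀ x ∈ Set.Icc 0 T, 0 ≤ f x)
    (hint : IntegrableOn f (Set.Icc 0 T))
    (hpos : 0 < ∫ x in (0:ℝ)..T, f x) :
    ∀ b₁ b₂ : ℝ, 0 ≤ b₁ → b₁ ≤ b₂ →
      T * (∫ x in (0:ℝ)..T, (f x + b₂) ^ 2) / (∫ x in (0:ℝ)..T, (f x + b₂)) ^ 2
        ≤ T * (∫ x in (0:ℝ)..T, (f x + b₁) ^ 2) / (∫ x in (0:ℝ)..T, (f x + b₁)) ^ 2 := by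
  intro b₁ b₂ hb₁ hb₁₂
  have hb₂ : 0 ≤ b₂ := le_trans hb₁ hb₁₂
  have hintIoc : IntegrableOn f (Set.Ioc 0 T) :=
    hint.mono_set Set.Ioc_subset_Icc_self
  have hfii : IntervalIntegrable f volume 0 T :=
    (intervalIntegrable_iff_integrableOn_Ioc_of_le hT.le).2 hintIoc
  set I1 : ℝ := ∫ x in (0:ℝ)..T, f x with hI1
  -- linear integral
  have hlin : ∀ b : ℝ, (∫ x in (0:ℝ)..T, (f x + b)) = I1 + b * T := by
    intro b
    rw [intervalIntegral.integral_add hfii (intervalIntegrable_const),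
      intervalIntegral.integral_const]
    simp [mul_comm, hI1]
  have hJ₁ : 0 < I1 + b₁ * T := by positivity
  have hJ₂ : 0 < I1 + b₂ * T := by positivity
  by_cases hf2 : IntegrableOn (fun x => f x ^ 2) (Set.Ioc 0 T)
  · -- integrable case
    have hf2ii : IntervalIntegrable (fun x => f x ^ 2) volume 0 T :=
      (intervalIntegrable_iff_integrableOn_Ioc_of_le hT.le).2 hf2
    set A : ℝ := ∫ x in (0:ℝ)..T, f x ^ 2 with hA
    have hquad : ∀ b : ℝ,
        (∫ x in (0:ℝ)..T, (f x + b) ^ 2) = A + 2 * b * I1 + b ^ 2 * T := by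
      intro b
      have h1 : ∀ x, (f x + b) ^ 2 = f x ^ 2 + ((2 * b) * f x + b ^ 2) := by
        intro x; ring
      simp_rw [h1]
      rw [intervalIntegral.integral_add hf2ii
          (((hfii.const_mul (2 * b))).add intervalIntegrable_const),
        intervalIntegral.integral_add (hfii.const_mul (2 * b)) intervalIntegrable_const,
        intervalIntegral.integral_const_mul, intervalIntegral.integral_const]
      simp [hA, hI1]; ring
    -- Cauchy–Schwarz: I1 ^ 2 ≤ T * A
    have hcs : I1 ^ 2 ≤ T * A := by
      have hnn : 0 ≤ ∫ x in (0:ℝ)..T, (f x - I1 / T) ^ 2 := by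
        apply intervalIntegral.integral_nonneg hT.le
        intro x _; positivity
      have hex : (∫ x in (0:ℝ)..T, (f x - I1 / T) ^ 2)
          = A - 2 * (I1 / T) * I1 + (I1 / T) ^ 2 * T := by
        have h1 : ∀ x, (f x - I1 / T) ^ 2
            = f x ^ 2 + ((2 * (-(I1 / T))) * f x + (I1 / T) ^ 2) := by
          intro x; ring
        simp_rw [h1]
        rw [intervalIntegral.integral_add hf2ii
            (((hfii.const_mul (2 * (-(I1 / T))))).add intervalIntegrable_const),
          intervalIntegral.integral_add (hfii.const_mul (2 * (-(I1 / T))))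
            intervalIntegrable_const,
          intervalIntegral.integral_const_mul, intervalIntegral.integral_const]
        simp [hA, hI1]; ring
      rw [hex] at hnn
      have hT' : T ≠ 0 := ne_of_gt hT
      have : 0 ≤ A - I1 ^ 2 / T := by
        have : A - 2 * (I1 / T) * I1 + (I1 / T) ^ 2 * T = A - I1 ^ 2 / T := by
          field_simp; ring
        linarith [this ▸ hnn]
      calc I1 ^ 2 = (I1 ^ 2 / T) * T := by field_simp
        _ ≤ A * T := by
            apply mul_le_mul_of_nonneg_right _ hT.le
            linarith
        _ = T * A := mul_comm _ _
    rw [hlin b₁, hlin b₂, hquad b₁, hquad b₂,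
      div_le_div_iff₀ (by positivity) (by positivity)]
    nlinarith [mul_nonneg (mul_nonneg (mul_nonneg hT.le (sub_nonneg.2 hb₁₂))
      (sub_nonneg.2 hcs)) (by positivity : (0:ℝ) ≤ 2 * I1 + T * (b₁ + b₂))]
  · -- junk case: both quadratic integrals are 0
    have hzero : ∀ b : ℝ, (∫ x in (0:ℝ)..T, (f x + b) ^ 2) = 0 := by
      intro b
      apply intervalIntegral.integral_undef
      intro h
      apply hf2
      have h' : IntegrableOn (fun x => (f x + b) ^ 2) (Set.Ioc 0 T) :=
        (intervalIntegrable_iff_integrableOn_Ioc_of_le hT.le).1 h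
      have hrest : IntegrableOn (fun x => 2 * b * f x + b ^ 2) (Set.Ioc 0 T) :=
        (hintIoc.const_mul (2 * b)).add (integrableOn_const measure_Ioc_lt_top.ne)
      have heq : (fun x => f x ^ 2)
          = fun x => (f x + b) ^ 2 - (2 * b * f x + b ^ 2) := by
        funext x; ring
      rw [heq]
      exact h'.sub hrest
    rw [hzero b₁, hzero b₂]
    simp
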